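/- Let P⋆ ∈ Gr(m,ℝ^M) be a local minimizer of J on Gr(m,ℝ^M). Then [G(P⋆),P⋆] = 0, and for every real symmetric M×M matrix X satisfying XP⋆ + P⋆X = X (i.e. X in the tangent space to Gr(m,ℝ^M) at P⋆) one has ⟨X, [[G(P⋆),X],P⋆] − [[AXA,P⋆],P⋆]⟩ ≥ 0. -/

import Mathlib

open Matrix Filter Topology

noncomputable section

/-- Commutator of matrices. -/
def commut {M : ℕ} (X Y : Matrix (Fin M) (Fin M) ℝ) : Matrix (Fin M) (Fin M) ℝ :=
  X * Y - Y * X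

/-- The Grassmann manifold `Gr(m, ℝ^M)`. -/
def Gr (M m : ℕ) (P : Matrix (Fin M) (Fin M) ℝ) : Prop :=
  P.IsSymm ∧ P * P = P ∧ P.trace = (m : ℝ)

/-- The cost function `J(P) = Tr(BP) - (1/2) Tr(APAP)`. -/
def Jfun {M : ℕ} (A B P : Matrix (Fin M) (Fin M) ℝ) : ℝ :=
  (B * P).trace - (1 / 2) * (A * P * A * P).trace

/-- The gradient `G(P) = B - APA`. -/
def Gmap {M : ℕ} (A B P : Matrix (Fin M) (Fin M) ℝ) : Matrix (Fin M) (Fin M) ℝ :=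
  B - A * P * A

/-- Frobenius inner product `⟨X,Y⟩ = Tr(Xᵀ Y)`. -/
def frobInner {M : ℕ} (X Y : Matrix (Fin M) (Fin M) ℝ) : ℝ := (Xᵀ * Y).trace

/-! ### Auxiliary material -/

section Aux

open NormedSpace

local notation "Mat" M => Matrix (Fin M) (Fin M) ℝ

variable {M : ℕ}

/-- Trace of `ᵀ*self` zero implies zero. -/
lemma aux_trace_self_eq_zero {S : Mat M} (h : (Sᵀ * S).trace = 0) : S = 0 := by
  have hexp : (Sᵀ * S).trace = ∑ j, ∑ i, S i j ^ 2 := by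
    simp [Matrix.trace, Matrix.mul_apply, Matrix.diag, sq]
  rw [hexp] at h
  ext i j
  have h1 : ∀ j ∈ Finset.univ, (0:ℝ) ≤ ∑ i, S i j ^ 2 := by
    intro j _; positivity
  have h2 := (Finset.sum_eq_zero_iff_of_nonneg h1).mp h j (Finset.mem_univ j)
  have h3 : ∀ i ∈ Finset.univ, (0:ℝ) ≤ S i j ^ 2 := by intro i _; positivity
  have h4 := (Finset.sum_eq_zero_iff_of_nonneg h3).mp h2 i (Finset.mem_univ i)
  simpa using pow_eq_zero_iff (n := 2) (by norm_num) |>.mp h4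

lemma rot3 (a b c : Mat M) : (a*(b*c)).trace = (b*(c*a)).trace := by
  rw [Matrix.trace_mul_comm]; simp [Matrix.mul_assoc]

lemma rot4 (a b c d : Mat M) : (a*(b*(c*d))).trace = (b*(c*(d*a))).trace := by
  rw [Matrix.trace_mul_comm]; simp [Matrix.mul_assoc]

/-- Second-order necessary condition for a local minimum of a real function. -/
lemma aux_second_order {c c1 : ℝ → ℝ} {L : ℝ}
    (hc : ∀ t, HasDerivAt c (c1 t) t) (h1 : HasDerivAt c1 L 0)
    (hmin : IsLocalMin c 0) : 0 ≤ L := by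
  by_contra hL
  push_neg at hL
  have hslope : Tendsto (slope c1 0) (𝓝[≠] 0) (𝓝 L) :=
    hasDerivAt_iff_tendsto_slope.mp h1
  have hneg : ∀ᶠ t in 𝓝[≠] (0:ℝ), slope c1 0 t < 0 :=
    hslope.eventually_lt_const hL
  have h10 : c1 0 = 0 := by
    have := hmin.deriv_eq_zero
    rwa [(hc 0).deriv] at this
  rw [eventually_nhdsWithin_iff] at hneg
  rw [Metric.eventually_nhds_iff] at hneg
  obtain ⟨δ, hδ, hneg⟩ := hneg
  obtain ⟨ε, hε, hminε⟩ :=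
    Metric.eventually_nhds_iff.mp (hmin.filter_mono (le_refl _) : ∀ᶠ t in 𝓝 0, c 0 ≤ c t)
  have hc1neg : ∀ t ∈ Set.Ioo (0:ℝ) δ, c1 t < 0 := by
    intro t ht
    have h' := hneg (y := t) (by simpa [abs_of_pos ht.1] using ht.2) (ne_of_gt ht.1)
    rw [slope_def_field, h10] at h'
    have := div_neg_iff.mp (by simpa using h')
    rcases this with ⟨h1', h2'⟩ | ⟨h1', h2'⟩
    · linarith [ht.1]
    · linarith
  set t0 : ℝ := min δ ε / 2 with ht0def
  have hminpos : 0 < min δ ε := lt_min hδ hε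
  have ht0pos : 0 < t0 := by positivity
  have ht0δ : t0 < δ := by
    have : min δ ε ≤ δ := min_le_left _ _
    rw [ht0def]; linarith
  have ht0ε : t0 < ε := by
    have : min δ ε ≤ ε := min_le_right _ _
    rw [ht0def]; linarith
  have hcont : Continuous c := by
    have : Differentiable ℝ c := fun t => (hc t).differentiableAt
    exact this.continuous
  have hanti : StrictAntiOn c (Set.Icc 0 t0) := by
    apply strictAntiOn_of_deriv_neg (convex_Icc 0 t0) hcont.continuousOn
    intro t ht
    rw [interior_Icc] at ht
    rw [(hc t).deriv]
    exact hc1neg t ⟨ht.1, lt_trans ht.2 ht0δ⟩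
  have hlt : c t0 < c 0 :=
    hanti ⟨le_refl 0, le_of_lt ht0pos⟩ ⟨le_of_lt ht0pos, le_refl _⟩ ht0pos
  have hge : c 0 ≤ c t0 := hminε (by rw [dist_zero_right, Real.norm_eq_abs, abs_of_pos ht0pos]; exact ht0ε)
  linarith

section Norm

attribute [local instance] Matrix.linftyOpNormedRing Matrix.linftyOpNormedAlgebra

lemma aux_hasDerivAt_trace {f : ℝ → Mat M} {f' : Mat M} {t : ℝ} (h : HasDerivAt f f' t) :
    HasDerivAt (fun s => (f s).trace) f'.trace t := by
  have := ((Matrix.traceLinearMap (Fin M) ℝ ℝ).toContinuousLinearMap.hasFDerivAt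
    (x := f t)).comp_hasDerivAt t h
  exact this

variable (Ω Pstar : Mat M)

/-- The curve `t ↦ exp(tΩ) P⋆ exp(-tΩ)`. -/
def auxPt (t : ℝ) : Mat M := exp (t • Ω) * Pstar * exp (t • (-Ω))

lemma aux_exp_neg_mul_exp (t : ℝ) : exp (t • (-Ω)) * exp (t • Ω) = 1 := by
  rw [← Matrix.exp_add_of_commute]
  · simp
  · simpa [Commute, SemiconjBy] using
      ((Commute.refl Ω).smul_left t |>.smul_right t |>.neg_right).symm

lemma auxPt_zero : auxPt Ω Pstar 0 = Pstar := by simp [auxPt, exp_zero]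

lemma auxPt_symm (hΩ : Ωᵀ = -Ω) (hPs : Pstar.IsSymm) (t : ℝ) : (auxPt Ω Pstar t).IsSymm := by
  have h1 : (exp (t • Ω))ᵀ = exp (t • (-Ω)) := by
    rw [← Matrix.exp_transpose, Matrix.transpose_smul, hΩ]
  have h2 : (exp (t • (-Ω)))ᵀ = exp (t • Ω) := by
    rw [← Matrix.exp_transpose, Matrix.transpose_smul, Matrix.transpose_neg, hΩ, neg_neg]
  simp only [Matrix.IsSymm, auxPt, Matrix.transpose_mul, h1, h2,
    Matrix.IsSymm.eq hPs, Matrix.mul_assoc]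

lemma auxPt_proj (hP2 : Pstar * Pstar = Pstar) (t : ℝ) :
    auxPt Ω Pstar t * auxPt Ω Pstar t = auxPt Ω Pstar t := by
  simp only [auxPt, Matrix.mul_assoc]
  rw [← Matrix.mul_assoc (exp (t • (-Ω))) (exp (t • Ω)), aux_exp_neg_mul_exp,
    Matrix.one_mul, ← Matrix.mul_assoc Pstar Pstar, hP2]

lemma auxPt_trace (t : ℝ) : (auxPt Ω Pstar t).trace = Pstar.trace := by
  rw [auxPt, Matrix.trace_mul_comm, ← Matrix.mul_assoc, aux_exp_neg_mul_exp, Matrix.one_mul]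

lemma auxPt_deriv (t : ℝ) :
    HasDerivAt (auxPt Ω Pstar) (Ω * auxPt Ω Pstar t - auxPt Ω Pstar t * Ω) t := by
  have h1 : HasDerivAt (fun s : ℝ => exp (s • Ω) * Pstar)
      (Ω * exp (t • Ω) * Pstar) t := (hasDerivAt_exp_smul_const' Ω t).mul_const Pstar
  have h2 : HasDerivAt (fun s : ℝ => exp (s • (-Ω))) (exp (t • (-Ω)) * (-Ω)) t :=
    hasDerivAt_exp_smul_const (-Ω) t
  have := h1.mul h2
  refine this.congr_deriv ?_
  simp only [auxPt, Matrix.mul_assoc, Matrix.mul_neg, Matrix.neg_mul]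
  abel_nf

variable {Ω Pstar}

lemma aux_J_deriv (A B : Mat M) {P : ℝ → Mat M} {d : Mat M} {t : ℝ} (hD : HasDerivAt P d t) :
    HasDerivAt (fun s => (B * P s).trace - (1/2 : ℝ) * (A * P s * A * P s).trace)
      ((B * d).trace - (A * P t * A * d).trace) t := by
  have h1 : HasDerivAt (fun s => (B * P s).trace) (B * d).trace t :=
    aux_hasDerivAt_trace (hD.const_mul B)
  have h2 : HasDerivAt (fun s => A * P s * A) (A * d * A) t :=
    (hD.const_mul A).mul_const A
  have h3 : HasDerivAt (fun s => (A * P s * A * P s).trace)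
      ((A * d * A * P t).trace + (A * P t * A * d).trace) t := by
    have := aux_hasDerivAt_trace (h2.mul hD)
    simpa [Matrix.trace_add] using this
  have := h1.sub ((h3.const_mul (1/2 : ℝ)))
  refine this.congr_deriv ?_
  have hcyc : (A * d * A * P t).trace = (A * P t * A * d).trace := by
    rw [Matrix.mul_assoc (A * d), Matrix.trace_mul_comm]
    simp [Matrix.mul_assoc]
  rw [hcyc]; ring

lemma aux_c1_deriv (A B : Mat M) {P D : ℝ → Mat M} {d d2 : Mat M} {t : ℝ}
    (hP : HasDerivAt P d t) (hD : HasDerivAt D d2 t) :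
    HasDerivAt (fun s => (B * D s).trace - (A * P s * A * D s).trace)
      ((B * d2).trace - ((A * d * A * D t).trace + (A * P t * A * d2).trace)) t := by
  have h1 : HasDerivAt (fun s => (B * D s).trace) (B * d2).trace t :=
    aux_hasDerivAt_trace (hD.const_mul B)
  have h2 : HasDerivAt (fun s => A * P s * A) (A * d * A) t :=
    (hP.const_mul A).mul_const A
  have h3 : HasDerivAt (fun s => (A * P s * A * D s).trace)
      ((A * d * A * D t).trace + (A * P t * A * d2).trace) t := by
    have := aux_hasDerivAt_trace (h2.mul hD)
    simpa [Matrix.trace_add] using this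
  exact h1.sub h3

set_option maxHeartbeats 1000000 in
/-- The key analytic lemma: first- and second-order conditions along the curve
generated by a tangent vector `X`. -/
lemma aux_key {m : ℕ} (A B Pstar : Mat M) (hGr : Gr M m Pstar)
    (hmin : IsLocalMinOn (fun P => Jfun A B P) {P | Gr M m P} Pstar)
    (X : Mat M) (hXs : X.IsSymm) (hXt : X * Pstar + Pstar * X = X) :
    ((B * X).trace - (A * Pstar * A * X).trace = 0) ∧
      0 ≤ (B * ((X*Pstar - Pstar*X) * X - X * (X*Pstar - Pstar*X))).trace -
          ((A * X * A * X).trace +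
            (A * Pstar * A * ((X*Pstar - Pstar*X) * X - X * (X*Pstar - Pstar*X))).trace) := by
  obtain ⟨hPs, hP2, htr⟩ := hGr
  set P := Pstar with hPdef
  -- P X P = 0
  have hPXP : P * (X * P) = 0 := by
    have h : P * ((X * P + P * X) * P) = P * (X * P) := by rw [hXt]
    have h' : P * (X * P) + P * (X * P) = P * (X * P) := by
      calc P * (X * P) + P * (X * P)
          = P * ((X * P + P * X) * P) := by
            simp only [Matrix.add_mul, Matrix.mul_add, Matrix.mul_assoc]
            rw [← Matrix.mul_assoc P P, hP2]
        _ = P * (X * P) := h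
    exact add_eq_left.mp h'
  set Ωm : Mat M := X * P - P * X with hΩdef
  have hΩskew : Ωmᵀ = -Ωm := by
    rw [hΩdef, Matrix.transpose_sub, Matrix.transpose_mul, Matrix.transpose_mul,
      hXs.eq, hPs.eq]
    abel
  -- the curve and its properties
  have hmem : ∀ t, auxPt Ωm P t ∈ {Q | Gr M m Q} := by
    intro t
    exact ⟨auxPt_symm Ωm P hΩskew hPs t, auxPt_proj Ωm P hP2 t, by rw [auxPt_trace]; exact htr⟩
  set D : ℝ → Mat M := fun t => Ωm * auxPt Ωm P t - auxPt Ωm P t * Ωm with hDdef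
  have hPt : ∀ t, HasDerivAt (auxPt Ωm P) (D t) t := fun t => auxPt_deriv Ωm P t
  have hD : ∀ t, HasDerivAt D (Ωm * D t - D t * Ωm) t :=
    fun t => ((hPt t).const_mul Ωm).sub ((hPt t).mul_const Ωm)
  set c : ℝ → ℝ := fun t => (B * auxPt Ωm P t).trace -
      (1/2 : ℝ) * (A * auxPt Ωm P t * A * auxPt Ωm P t).trace with hcdef
  set c1 : ℝ → ℝ := fun t => (B * D t).trace - (A * auxPt Ωm P t * A * D t).trace with hc1def
  have hc : ∀ t, HasDerivAt c (c1 t) t := fun t => aux_J_deriv A B (hPt t)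
  have hc1 : HasDerivAt c1
      ((B * (Ωm * D 0 - D 0 * Ωm)).trace -
        ((A * D 0 * A * D 0).trace + (A * auxPt Ωm P 0 * A * (Ωm * D 0 - D 0 * Ωm)).trace)) 0 :=
    aux_c1_deriv A B (hPt 0) (hD 0)
  -- local minimum along the curve
  have hcontPt : Tendsto (auxPt Ωm P) (𝓝 0) (𝓝[{Q | Gr M m Q}] P) := by
    rw [tendsto_nhdsWithin_iff]
    constructor
    · have h := (hPt 0).continuousAt
      unfold ContinuousAt at h
      rwa [auxPt_zero] at h
    · exact Eventually.of_forall hmem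
  have hlm : IsLocalMin c 0 := by
    have hev : ∀ᶠ t in 𝓝 (0:ℝ), c 0 ≤ c t := by
      filter_upwards [hcontPt.eventually hmin] with t h
      simpa [hcdef, Jfun, auxPt_zero] using h
    exact hev
  -- identify D 0 = X
  have hD0 : D 0 = X := by
    rw [hDdef]
    simp only [auxPt_zero]
    rw [hΩdef]
    have e1 : (X * P - P * X) * P = X * P - P * (X * P) := by
      simp only [Matrix.sub_mul, Matrix.mul_assoc, hP2]
    have e2 : P * (X * P - P * X) = P * (X * P) - P * X := by
      simp only [Matrix.mul_sub, ← Matrix.mul_assoc, hP2]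
    rw [e1, e2, hPXP]
    simpa using hXt
  have hPt0 : auxPt Ωm P 0 = P := auxPt_zero Ωm P
  constructor
  · have h1 := hlm.deriv_eq_zero
    rw [(hc 0).deriv] at h1
    rw [hc1def] at h1
    simpa [hPt0, hD0] using h1
  · have h2 := aux_second_order hc hc1 hlm
    rw [hPt0, hD0] at h2
    exact h2

/-- Trace identity for the second-order term. -/
lemma aux_ident (Gm Y P X : Mat M) (hP2 : P * P = P) (hXt : X * P + P * X = X)
    (hPXP : P * (X * P) = 0) :
    (X * (((Gm * X - X * Gm) * P - P * (Gm * X - X * Gm)) -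
        ((Y * P - P * Y) * P - P * (Y * P - P * Y)))).trace
      = (Gm * ((X * P - P * X) * X - X * (X * P - P * X))).trace - (Y * X).trace := by
  have hP2l : ∀ Z : Mat M, P * (P * Z) = P * Z := fun Z => by
    rw [← Matrix.mul_assoc, hP2]
  have e1 : (X * (Gm * (X * P))).trace = (Gm * (X * (P * X))).trace := rot4 X Gm X P
  have e2 : (X * (X * (Gm * P))).trace = (Gm * (P * (X * X))).trace :=
    (rot4 X X Gm P).trans (rot4 X Gm P X)
  have e3 : (X * (P * (Gm * X))).trace = (Gm * (X * (X * P))).trace :=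
    (rot4 X P Gm X).trans (rot4 P Gm X X)
  have e4 : (X * (P * (X * Gm))).trace = (Gm * (X * (P * X))).trace :=
    (rot4 X P X Gm).trans ((rot4 P X Gm X).trans (rot4 X Gm X P))
  have f1 : (X * (Y * P)).trace = (Y * (P * X)).trace := rot3 X Y P
  have f2 : (X * (P * (Y * P))).trace = 0 := by
    rw [(rot4 X P Y P).trans (rot4 P Y P X), hPXP]
    simp
  have f3 : (X * (P * Y)).trace = (Y * (X * P)).trace := (rot3 X P Y).trans (rot3 P Y X)
  have f4 : (Y * (P * X)).trace + (Y * (X * P)).trace = (Y * X).trace := by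
    rw [← Matrix.trace_add, ← Matrix.mul_add, show P * X + X * P = X from by
      rw [add_comm]; exact hXt]
  simp only [Matrix.mul_sub, Matrix.sub_mul, Matrix.trace_sub, Matrix.mul_assoc, hP2, hP2l]
  linarith [e1, e2, e3, e4, f1, f2, f3, f4]

end Norm

end Aux

/-- if `P⋆ ∈ Gr(m,ℝ^M)` is a local minimizer of `J` on `Gr(m,ℝ^M)`, then
`[G(P⋆),P⋆] = 0` and for every symmetric `X` with `XP⋆ + P⋆X = X` (tangent vector),
`⟨X, [[G(P⋆),X],P⋆] − [[AXA,P⋆],P⋆]⟩ ≥ 0`. -/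
theorem stmt_1 {M m : ℕ} (hM : 2 ≤ M) (hm1 : 1 ≤ m) (hm2 : m ≤ M - 1)
    (A B : Matrix (Fin M) (Fin M) ℝ) (hA : A.IsSymm) (hApsd : A.PosSemidef)
    (hB : B.IsSymm) (Pstar : Matrix (Fin M) (Fin M) ℝ) (hP : Gr M m Pstar)
    (hmin : IsLocalMinOn (fun P => Jfun A B P) {P | Gr M m P} Pstar) :
    commut (Gmap A B Pstar) Pstar = 0 ∧
      ∀ X : Matrix (Fin M) (Fin M) ℝ, X.IsSymm → X * Pstar + Pstar * X = X →
        0 ≤ frobInner X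
          (commut (commut (Gmap A B Pstar) X) Pstar -
            commut (commut (A * X * A) Pstar) Pstar) := by
  obtain ⟨hPs, hP2, htr⟩ := id hP
  have hP2l : ∀ Z : Matrix (Fin M) (Fin M) ℝ, Pstar * (Pstar * Z) = Pstar * Z := fun Z => by
    rw [← Matrix.mul_assoc, hP2]
  set Gm : Matrix (Fin M) (Fin M) ℝ := B - A * Pstar * A with hGmdef
  have hGms : Gmᵀ = Gm := by
    rw [hGmdef, Matrix.transpose_sub, hB.eq]
    congr 1
    simp [Matrix.transpose_mul, hA.eq, hPs.eq, Matrix.mul_assoc]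
  have hPXP : ∀ X : Matrix (Fin M) (Fin M) ℝ, X * Pstar + Pstar * X = X →
      Pstar * (X * Pstar) = 0 := by
    intro X hXt
    have h' : Pstar * (X * Pstar) + Pstar * (X * Pstar) = Pstar * (X * Pstar) := by
      calc Pstar * (X * Pstar) + Pstar * (X * Pstar)
          = Pstar * ((X * Pstar + Pstar * X) * Pstar) := by
            simp only [Matrix.add_mul, Matrix.mul_add, Matrix.mul_assoc]
            rw [← Matrix.mul_assoc Pstar Pstar, hP2]
        _ = Pstar * (X * Pstar) := by rw [hXt]
    exact add_eq_left.mp h'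
  constructor
  · -- first-order condition
    set S : Matrix (Fin M) (Fin M) ℝ := Gm * Pstar - Pstar * Gm with hSdef
    have hSskew : Sᵀ = -S := by
      rw [hSdef, Matrix.transpose_sub, Matrix.transpose_mul, Matrix.transpose_mul,
        hGms, hPs.eq]
      abel
    set X0 : Matrix (Fin M) (Fin M) ℝ := S * Pstar - Pstar * S with hX0def
    have hX0s : X0.IsSymm := by
      rw [Matrix.IsSymm, hX0def, Matrix.transpose_sub, Matrix.transpose_mul,
        Matrix.transpose_mul, hSskew, hPs.eq]
      simp only [Matrix.mul_neg, Matrix.neg_mul]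
      abel
    have hX0t : X0 * Pstar + Pstar * X0 = X0 := by
      rw [hX0def]
      simp only [Matrix.sub_mul, Matrix.mul_sub, Matrix.mul_assoc, hP2, hP2l]
      abel
    have hkey := (aux_key A B Pstar hP hmin X0 hX0s hX0t).1
    have e0 : (B * X0).trace - (A * Pstar * A * X0).trace = (Gm * X0).trace := by
      rw [hGmdef, Matrix.sub_mul, Matrix.trace_sub]
    have e1 : (Gm * X0).trace = (Sᵀ * S).trace := by
      rw [hX0def, Matrix.mul_sub, Matrix.trace_sub]
      have r1 : (Gm * (S * Pstar)).trace = (S * (Pstar * Gm)).trace := rot3 Gm S Pstar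
      have r2 : (Gm * (Pstar * S)).trace = (S * (Gm * Pstar)).trace :=
        (rot3 Gm Pstar S).trans (rot3 Pstar S Gm)
      rw [r1, r2, ← Matrix.trace_sub, ← Matrix.mul_sub,
        show Pstar * Gm - Gm * Pstar = -S from by rw [hSdef]; abel, hSskew]
      simp [Matrix.mul_neg, Matrix.neg_mul]
    have hz : (Sᵀ * S).trace = 0 := by rw [← e1, ← e0]; exact hkey
    have hS0 : S = 0 := aux_trace_self_eq_zero hz
    show commut (Gmap A B Pstar) Pstar = 0
    have : commut (Gmap A B Pstar) Pstar = S := by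
      simp only [commut, Gmap, hSdef, hGmdef]
    rw [this, hS0]
  · intro X hXs hXt
    have hkey := (aux_key A B Pstar hP hmin X hXs hXt).2
    have hident := aux_ident Gm (A * X * A) Pstar X hP2 hXt (hPXP X hXt)
    have hfr : frobInner X
        (commut (commut (Gmap A B Pstar) X) Pstar - commut (commut (A * X * A) Pstar) Pstar)
        = (X * (((Gm * X - X * Gm) * Pstar - Pstar * (Gm * X - X * Gm)) -
            ((A * X * A * Pstar - Pstar * (A * X * A)) * Pstar -
              Pstar * (A * X * A * Pstar - Pstar * (A * X * A))))).trace := by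
      rw [frobInner, hXs.eq]
      simp only [commut, Gmap, ← hGmdef]
    have hsplit : (Gm * ((X * Pstar - Pstar * X) * X - X * (X * Pstar - Pstar * X))).trace =
        (B * ((X * Pstar - Pstar * X) * X - X * (X * Pstar - Pstar * X))).trace -
          (A * Pstar * A * ((X * Pstar - Pstar * X) * X - X * (X * Pstar - Pstar * X))).trace := by
      rw [hGmdef, Matrix.sub_mul, Matrix.trace_sub]
    rw [hfr, hident, hsplit]
    linarith [hkey]
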